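/- Under the hypotheses of the LFR factorization with R proper, the subdiagonal entries of the Hessenberg matrix A satisfy a_{i+1,i} = q_{i+k+1,i+k} · r_{i+k,i} / conj(l_{i+1,i+k+1}) for i = 1, ..., n−1. Consequently a_{i+1,i} = 0 if and only if q_{i+k+1,i+k} = 0, i.e., A is proper (unreduced) if and only if Q̂ is proper. -/
import Mathlib

set_option maxRecDepth 8000
set_option maxHeartbeats 2000000

open scoped Matrix

theorem stmt_13 {n k : ℕ}
    (L R Q : Matrix (Fin (n + k)) (Fin (n + k)) ℂ)
    (hL : L ∈ Matrix.unitaryGroup (Fin (n + k)) ℂ)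
    (hLhess : ∀ i j : Fin (n + k), (i : ℕ) + k < (j : ℕ) → L i j = 0)
    (hLprop : ∀ i j : Fin (n + k), (j : ℕ) = (i : ℕ) + k → L i j ≠ 0)
    (hR : R ∈ Matrix.unitaryGroup (Fin (n + k)) ℂ)
    (hRhess : ∀ i j : Fin (n + k), (j : ℕ) + k < (i : ℕ) → R i j = 0)
    (hQ : Q ∈ Matrix.unitaryGroup (Fin (n + k)) ℂ)
    (hQhess : ∀ i j : Fin (n + k), (j : ℕ) + 1 < (i : ℕ) → Q i j = 0)
    (hQblock : ∀ i j : Fin (n + k), ((i : ℕ) < k ∨ (j : ℕ) < k) → Q i j = if i = j then 1 else 0)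
    (Tk : Matrix (Fin k) (Fin k) ℂ)
    (hTkTri : ∀ i j : Fin k, (j : ℕ) < (i : ℕ) → Tk i j = 0)
    (hTkUnit : IsUnit Tk.det)
    (T : Matrix (Fin (n + k)) (Fin k) ℂ)
    (hTtop : ∀ i j : Fin k, T (Fin.castLE (Nat.le_add_left k n) i) j = Tk i j)
    (hTbot : ∀ i : Fin (n + k), k ≤ (i : ℕ) → ∀ j, T i j = 0)
    (hLbot : ∀ i j : Fin k, L ⟨n + (i : ℕ), by have := i.isLt; omega⟩ (Fin.castLE (Nat.le_add_left k n) j) = (-Tk⁻¹) i j)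
    (hRprop : ∀ i j : Fin (n + k), (i : ℕ) = (j : ℕ) + k → R i j ≠ 0) :
    ∀ Ahat : Matrix (Fin (n + k)) (Fin (n + k)) ℂ,
      Ahat = L * (Q + T * ((Matrix.of fun (i : Fin k) (j : Fin (n + k)) => L ⟨n + (i : ℕ), by have := i.isLt; omega⟩ j) * Q)) * R →
      ∀ (j : ℕ) (hj : j + 1 < n),
        Ahat ⟨j + 1, by omega⟩ ⟨j, by omega⟩ =
          Q ⟨j + k + 1, by omega⟩ ⟨j + k, by omega⟩ * R ⟨j + k, by omega⟩ ⟨j, by omega⟩ /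
            (starRingEnd ℂ) (L ⟨j + 1, by omega⟩ ⟨j + k + 1, by omega⟩) ∧
        (Ahat ⟨j + 1, by omega⟩ ⟨j, by omega⟩ = 0 ↔ Q ⟨j + k + 1, by omega⟩ ⟨j + k, by omega⟩ = 0) := by
  intro Ahat hAhat j hj
  set Zm : Matrix (Fin k) (Fin (n + k)) ℂ :=
    Matrix.of fun (i : Fin k) (j : Fin (n + k)) =>
      L ⟨n + (i : ℕ), by have := i.isLt; omega⟩ j with hZm
  set Nm : Matrix (Fin (n + k)) (Fin (n + k)) ℂ := L + L * T * Zm with hNm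
  have hLL : L * star L = 1 := (Matrix.mem_unitaryGroup_iff).mp hL
  have hTkInv : Tk * Tk⁻¹ = 1 := Matrix.mul_nonsing_inv Tk hTkUnit
  -- orthonormality of rows of L, entrywise
  have h1 : ∀ p q : Fin (n + k), (∑ a, L p a * starRingEnd ℂ (L q a)) =
      if p = q then 1 else 0 := by
    intro p q
    have h := Matrix.ext_iff.mpr hLL p q
    rw [Matrix.mul_apply, Matrix.one_apply] at h
    simp only [Matrix.star_apply] at h
    simp only [starRingEnd_apply]
    exact h
  -- N entries vanish in the first k columns
  have hN1 : ∀ (i a : Fin (n + k)), (a : ℕ) < k → Nm i a = 0 := by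
    intro i a hak
    have key : ∀ d : Fin (n + k), (T * Zm) d a = if d = a then -1 else 0 := by
      intro d
      by_cases hdk : (d : ℕ) < k
      · have hd : d = Fin.castLE (Nat.le_add_left k n) ⟨d, hdk⟩ := by
          apply Fin.ext; rfl
        have ha : a = Fin.castLE (Nat.le_add_left k n) ⟨a, hak⟩ := by
          apply Fin.ext; rfl
        rw [Matrix.mul_apply]
        have hterm : ∀ c : Fin k, T d c * Zm c a = Tk ⟨d, hdk⟩ c * (-Tk⁻¹) c ⟨a, hak⟩ := by
          intro c
          have h2 : Zm c a = (-Tk⁻¹) c ⟨a, hak⟩ := hLbot c ⟨a, hak⟩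
          have h3 : T d c = Tk ⟨d, hdk⟩ c := hTtop ⟨d, hdk⟩ c
          rw [h2, h3]
        rw [Finset.sum_congr rfl (fun c _ => hterm c)]
        have : (∑ c : Fin k, Tk ⟨d, hdk⟩ c * (-Tk⁻¹) c ⟨a, hak⟩) =
            (Tk * (-Tk⁻¹)) ⟨d, hdk⟩ ⟨a, hak⟩ := (Matrix.mul_apply).symm
        rw [this, Matrix.mul_neg, hTkInv]
        simp only [Matrix.neg_apply, Matrix.one_apply]
        by_cases hda : d = a
        · rw [if_pos hda, if_pos (by apply Fin.ext; simpa [Fin.ext_iff] using hda)]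
        · rw [if_neg hda, if_neg (by simp only [Fin.ext_iff] at hda ⊢; exact hda), neg_zero]
      · rw [Matrix.mul_apply, if_neg (by intro h; rw [h] at hdk; omega),
          Finset.sum_eq_zero]
        intro c _
        rw [hTbot d (le_of_not_gt hdk) c, zero_mul]
    have hexp : Nm i a = L i a + ∑ d, L i d * (T * Zm) d a := by
      rw [hNm, Matrix.add_apply, Matrix.mul_assoc, Matrix.mul_apply]
    rw [hexp, Finset.sum_congr rfl (fun d _ => by rw [key d])]
    simp [mul_ite, Finset.sum_ite_eq']
  -- key orthogonality: rows of N against conjugated rows of L (for row index < n)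
  have hkey : ∀ i m : Fin (n + k), (m : ℕ) < n →
      (∑ a, Nm i a * starRingEnd ℂ (L m a)) = if i = m then 1 else 0 := by
    intro i m hm
    have hexp : ∀ a, Nm i a = L i a + ∑ c : Fin k, (L * T) i c * Zm c a := by
      intro a; rw [hNm, Matrix.add_apply, Matrix.mul_apply]
    calc (∑ a, Nm i a * starRingEnd ℂ (L m a))
        = (∑ a, L i a * starRingEnd ℂ (L m a)) +
          ∑ a, (∑ c : Fin k, (L * T) i c * Zm c a) * starRingEnd ℂ (L m a) := by
          rw [← Finset.sum_add_distrib]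
          exact Finset.sum_congr rfl (fun a _ => by rw [hexp a, add_mul])
      _ = if i = m then 1 else 0 := by
          rw [h1 i m]
          have hzero : (∑ a, (∑ c : Fin k, (L * T) i c * Zm c a) * starRingEnd ℂ (L m a)) = 0 := by
            have : ∀ a, (∑ c : Fin k, (L * T) i c * Zm c a) * starRingEnd ℂ (L m a) =
                ∑ c : Fin k, (L * T) i c * (Zm c a * starRingEnd ℂ (L m a)) := by
              intro a; rw [Finset.sum_mul]; exact Finset.sum_congr rfl (fun c _ => by ring)
            rw [Finset.sum_congr rfl (fun a _ => this a), Finset.sum_comm]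
            apply Finset.sum_eq_zero
            intro c _
            rw [← Finset.mul_sum]
            have : (∑ a, Zm c a * starRingEnd ℂ (L m a)) = 0 := by
              have h2 : (∑ a, Zm c a * starRingEnd ℂ (L m a)) =
                  ∑ a, L ⟨n + (c : ℕ), by have := c.isLt; omega⟩ a * starRingEnd ℂ (L m a) := rfl
              rw [h2, h1]
              rw [if_neg]
              intro h
              have := congrArg Fin.val h
              simp at this
              omega
            rw [this, mul_zero]
          rw [hzero, add_zero]
  -- N i a = 0 for a < i + k (i < n), by strong induction on a
  have hA : ∀ t : ℕ, ∀ i : Fin (n + k), (i : ℕ) < n → ∀ a : Fin (n + k),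
      (a : ℕ) = t → t < (i : ℕ) + k → Nm i a = 0 := by
    intro t
    induction t using Nat.strong_induction_on with
    | _ t IH =>
      intro i hi a hat htlt
      by_cases hak : t < k
      · exact hN1 i a (by omega)
      · push_neg at hak
        have hmn : t - k < n := by omega
        set m : Fin (n + k) := ⟨t - k, by omega⟩ with hmdef
        have h0 := hkey i m (by simpa using hmn)
        rw [if_neg (by intro h; have := congrArg Fin.val h; simp [hmdef] at this; omega)] at h0
        have hsingle : (∑ b, Nm i b * starRingEnd ℂ (L m b)) =
            Nm i a * starRingEnd ℂ (L m a) := by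
          apply Finset.sum_eq_single
          · intro b _ hba
            by_cases hbt : (b : ℕ) < t
            · rw [IH (b : ℕ) hbt i hi b rfl (by omega), zero_mul]
            · have hbgt : t < (b : ℕ) := by
                rcases lt_or_eq_of_le (le_of_not_gt hbt) with h | h
                · exact h
                · exact absurd (Fin.ext (by omega : (b : ℕ) = (a : ℕ))) hba
              rw [hLhess m b (by simp [hmdef]; omega), map_zero, mul_zero]
          · intro h; exact absurd (Finset.mem_univ a) h
        rw [hsingle] at h0
        have hLne : starRingEnd ℂ (L m a) ≠ 0 := by
          simp only [ne_eq, map_eq_zero]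
          exact hLprop m a (by simp [hmdef]; omega)
        exact (mul_eq_zero.mp h0).resolve_right hLne
  -- the value of N at the k-th superdiagonal
  have hval : ∀ i : Fin (n + k), (i : ℕ) < n → ∀ a : Fin (n + k),
      (a : ℕ) = (i : ℕ) + k → Nm i a * starRingEnd ℂ (L i a) = 1 := by
    intro i hi a ha
    have h0 := hkey i i (by omega)
    rw [if_pos rfl] at h0
    have hsingle : (∑ b, Nm i b * starRingEnd ℂ (L i b)) =
        Nm i a * starRingEnd ℂ (L i a) := by
      apply Finset.sum_eq_single
      · intro b _ hba
        by_cases hbt : (b : ℕ) < (i : ℕ) + k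
        · rw [hA (b : ℕ) i hi b rfl hbt, zero_mul]
        · have : (i : ℕ) + k < (b : ℕ) := by
            rcases lt_or_eq_of_le (le_of_not_gt hbt) with h | h
            · exact h
            · exact absurd (Fin.ext (by omega : (b : ℕ) = (a : ℕ))) hba
          rw [hLhess i b this, map_zero, mul_zero]
      · intro h; exact absurd (Finset.mem_univ a) h
    rw [hsingle] at h0
    exact h0
  -- rewrite Ahat as Nm * (Q * R)
  have hA' : Ahat = Nm * (Q * R) := by
    rw [hAhat, hNm]
    simp only [Matrix.mul_add, Matrix.add_mul, Matrix.mul_assoc]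
  -- set up the indices
  set i0 : Fin (n + k) := ⟨j + 1, by omega⟩ with hi0
  set j0 : Fin (n + k) := ⟨j, by omega⟩ with hj0
  set a1 : Fin (n + k) := ⟨j + k + 1, by omega⟩ with ha1
  set b1 : Fin (n + k) := ⟨j + k, by omega⟩ with hb1
  have hQRzero : ∀ a : Fin (n + k), j + k + 1 < (a : ℕ) → (Q * R) a j0 = 0 := by
    intro a ha
    rw [Matrix.mul_apply]
    apply Finset.sum_eq_zero
    intro d _
    by_cases hd : (d : ℕ) + 1 < (a : ℕ)
    · rw [hQhess a d hd, zero_mul]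
    · rw [hRhess d j0 (by simp [hj0]; omega), mul_zero]
  have hQRval : (Q * R) a1 j0 = Q a1 b1 * R b1 j0 := by
    rw [Matrix.mul_apply]
    apply Finset.sum_eq_single
    · intro d _ hd
      by_cases hdlt : (d : ℕ) < j + k
      · rw [hQhess a1 d (by simp [ha1]; omega), zero_mul]
      · have : j + k < (d : ℕ) := by
          rcases lt_or_eq_of_le (le_of_not_gt hdlt) with h | h
          · exact h
          · exact absurd (Fin.ext (by simp [hb1]; omega : (d : ℕ) = (b1 : ℕ))) hd
        rw [hRhess d j0 (by simp [hj0]; omega), mul_zero]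
    · intro h; exact absurd (Finset.mem_univ b1) h
  have hEntry : Ahat i0 j0 = Nm i0 a1 * (Q a1 b1 * R b1 j0) := by
    rw [hA', Matrix.mul_apply]
    rw [show (∑ a, Nm i0 a * (Q * R) a j0) = Nm i0 a1 * (Q * R) a1 j0 from ?_, hQRval]
    apply Finset.sum_eq_single
    · intro b _ hba
      by_cases hbt : (b : ℕ) < j + 1 + k
      · rw [hA (b : ℕ) i0 (by simp [hi0]; omega) b rfl (by simp [hi0]; omega), zero_mul]
      · have : j + k + 1 < (b : ℕ) := by
          rcases lt_or_eq_of_le (le_of_not_gt hbt) with h | h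
          · omega
          · exact absurd (Fin.ext (by simp [ha1]; omega : (b : ℕ) = (a1 : ℕ))) hba
        rw [hQRzero b this, mul_zero]
    · intro h; exact absurd (Finset.mem_univ a1) h
  have hvi : Nm i0 a1 * starRingEnd ℂ (L i0 a1) = 1 :=
    hval i0 (by simp [hi0]; omega) a1 (by simp [ha1, hi0]; omega)
  have hc : starRingEnd ℂ (L i0 a1) ≠ 0 := by
    simp only [ne_eq, map_eq_zero]
    exact hLprop i0 a1 (by simp [ha1, hi0]; omega)
  have hNne : Nm i0 a1 ≠ 0 := by
    intro h; rw [h, zero_mul] at hvi; exact zero_ne_one hvi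
  constructor
  · rw [hEntry, eq_div_iff hc]
    linear_combination (Q a1 b1 * R b1 j0) * hvi
  · rw [hEntry]
    have hRne : R b1 j0 ≠ 0 := hRprop b1 j0 (by simp [hb1, hj0])
    constructor
    · intro h
      rcases mul_eq_zero.mp h with h | h
      · exact absurd h hNne
      · rcases mul_eq_zero.mp h with h | h
        · exact h
        · exact absurd h hRne
    · intro h; rw [h, zero_mul, mul_zero]
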